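/- Let d and n be natural numbers with 2 ≤ d ≤ n and let h = ⌈log_d n⌉. Consider the star graph on vertices {0, 1, …, n−1} whose edges are {0, i} for i = 1, …, n−1. Then the minimum, over all injective maps φ: {0,…,n−1} → {1,…,d^h}, of Σ_{i=1}^{n−1} δ_{d,h}(φ(0), φ(i)) equals 2·(h·n − (d^h − 1)/(d−1)); that is, this value is attained by some injective φ and no injective φ gives a smaller value. (Here (d^h − 1)/(d−1) is an exact integer division, since d−1 divides d^h − 1.) -/

import Mathlib

/-- The canonical leaf distance on the complete `d`-regular tree of height `h`:
`δ_{d,h}(t,j) = 2·min{k ∈ {1,…,h} : ⌊(t−1)/d^k⌋ = ⌊(j−1)/d^k⌋}` for `t ≠ j`,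
and `δ_{d,h}(t,t) = 0`. -/
noncomputable def leafDist (d h t j : ℕ) : ℕ :=
  if t = j then 0
  else 2 * sInf {k : ℕ | 1 ≤ k ∧ k ≤ h ∧ (t - 1) / d ^ k = (j - 1) / d ^ k}

/-- Auxiliary half-distance. -/
noncomputable def halfD (d h t j : ℕ) : ℕ :=
  sInf {k : ℕ | 1 ≤ k ∧ k ≤ h ∧ (t - 1) / d ^ k = (j - 1) / d ^ k}

lemma leafDist_eq {d h t j : ℕ} (hne : t ≠ j) :
    leafDist d h t j = 2 * halfD d h t j := by
  simp [leafDist, halfD, hne]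

lemma halfD_mem {d h t j : ℕ} (hd : 2 ≤ d) (hh1 : 1 ≤ h) (ht : t ≤ d ^ h) (hj : j ≤ d ^ h) :
    halfD d h t j ∈ {k : ℕ | 1 ≤ k ∧ k ≤ h ∧ (t - 1) / d ^ k = (j - 1) / d ^ k} := by
  have hp : 0 < d ^ h := Nat.pow_pos (by omega)
  apply Nat.sInf_mem
  exact ⟨h, hh1, le_rfl, by
    rw [Nat.div_eq_of_lt (by omega), Nat.div_eq_of_lt (by omega)]⟩

lemma div_pow_congr {d a b k k' : ℕ} (hk : k ≤ k')
    (h : a / d ^ k = b / d ^ k) : a / d ^ k' = b / d ^ k' := by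
  have he : d ^ k' = d ^ k * d ^ (k' - k) := by rw [← pow_add]; congr 1; omega
  rw [he, ← Nat.div_div_eq_div_mul, ← Nat.div_div_eq_div_mul, h]

/-- Double counting lemma. -/
lemma sum_eq_sum_card (A : Finset ℕ) (H : ℕ) (g : ℕ → ℕ) (hg : ∀ i ∈ A, g i ≤ H) :
    ∑ i ∈ A, g i = ∑ k ∈ Finset.range H, (A.filter (fun i => k < g i)).card := by
  have h1 : ∀ i ∈ A, g i = ((Finset.range H).filter (fun k => k < g i)).card := by
    intro i hi
    have : (Finset.range H).filter (fun k => k < g i) = Finset.range (g i) := by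
      ext k
      simp only [Finset.mem_filter, Finset.mem_range]
      have := hg i hi
      omega
    rw [this, Finset.card_range]
  rw [Finset.sum_congr rfl h1]
  simp only [Finset.card_filter]
  rw [Finset.sum_comm]

/-- Value of half-distance from leaf 1. -/
lemma halfD_one {d h i : ℕ} (hd : 2 ≤ d) (hi : 1 ≤ i) (hih : i < d ^ h) :
    halfD d h 1 (i + 1) = Nat.log d i + 1 := by
  have hlog : Nat.log d i < h := Nat.log_lt_of_lt_pow (by omega) hih
  have hmem : Nat.log d i + 1 ∈
      {k : ℕ | 1 ≤ k ∧ k ≤ h ∧ (1 - 1) / d ^ k = (i + 1 - 1) / d ^ k} := by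
    refine ⟨by omega, by omega, ?_⟩
    simp only [Nat.add_sub_cancel]
    rw [Nat.zero_div, eq_comm, Nat.div_eq_of_lt]
    exact Nat.lt_pow_succ_log_self (by omega) i
  have hup : halfD d h 1 (i + 1) ≤ Nat.log d i + 1 := Nat.sInf_le hmem
  have hne : {k : ℕ | 1 ≤ k ∧ k ≤ h ∧ (1 - 1) / d ^ k = (i + 1 - 1) / d ^ k}.Nonempty :=
    ⟨_, hmem⟩
  obtain ⟨h1, h2, h3⟩ := Nat.sInf_mem hne
  have h3' : (1 - 1) / d ^ halfD d h 1 (i + 1) = (i + 1 - 1) / d ^ halfD d h 1 (i + 1) := h3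
  have h0 : i / d ^ halfD d h 1 (i + 1) = 0 := by simpa using h3'.symm
  have hlt : i < d ^ halfD d h 1 (i + 1) := by
    have hp : 0 < d ^ halfD d h 1 (i + 1) := Nat.pow_pos (by omega)
    exact (Nat.div_eq_zero_iff.mp h0).resolve_left (by omega)
  have := Nat.log_lt_of_lt_pow (by omega : i ≠ 0) hlt
  omega

theorem star_optimal_value (d n h : ℕ) (hd : 2 ≤ d) (hdn : d ≤ n)
    (hh : IsLeast {k : ℕ | n ≤ d ^ k} h) :
    IsLeast
      {s : ℕ | ∃ φ : ℕ → ℕ, Set.InjOn φ (Set.Iio n) ∧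
        (∀ i < n, 1 ≤ φ i ∧ φ i ≤ d ^ h) ∧
        s = ∑ i ∈ Finset.Ico 1 n, leafDist d h (φ 0) (φ i)}
      (2 * (h * n - (d ^ h - 1) / (d - 1))) := by
  obtain ⟨hn1, hmin⟩ := hh
  simp only [Set.mem_setOf_eq] at hn1
  have hh1 : 1 ≤ h := by
    by_contra hcon
    have : h = 0 := by omega
    subst this
    simp at hn1
    omega
  have hklt : ∀ k < h, d ^ k < n := by
    intro k hk
    by_contra hc
    push_neg at hc
    exact absurd (hmin hc) (by omega)
  have hn0 : 0 < n := by omega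
  -- geometric sum
  have hgeom : (d ^ h - 1) / (d - 1) = ∑ k ∈ Finset.range h, d ^ k :=
    (Nat.geomSum_eq hd h).symm
  have hT : h * n - (d ^ h - 1) / (d - 1) = ∑ k ∈ Finset.range h, (n - d ^ k) := by
    rw [hgeom]
    have : ∑ k ∈ Finset.range h, (n - d ^ k) + ∑ k ∈ Finset.range h, d ^ k = h * n := by
      rw [← Finset.sum_add_distrib]
      have : ∀ k ∈ Finset.range h, n - d ^ k + d ^ k = n := by
        intro k hk
        have := hklt k (Finset.mem_range.mp hk)
        omega
      rw [Finset.sum_congr rfl this, Finset.sum_const, Finset.card_range, smul_eq_mul, mul_comm]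
    omega
  constructor
  · -- attained by φ i = i + 1
    refine ⟨fun i => i + 1, ?_, ?_, ?_⟩
    · intro a _ b _ hab; simpa using hab
    · intro i hi
      show 1 ≤ i + 1 ∧ i + 1 ≤ d ^ h
      omega
    · show 2 * (h * n - (d ^ h - 1) / (d - 1)) =
        ∑ i ∈ Finset.Ico 1 n, leafDist d h 1 (i + 1)
      have hterm : ∀ i ∈ Finset.Ico 1 n,
          leafDist d h 1 (i + 1) = 2 * (Nat.log d i + 1) := by
        intro i hi
        rw [Finset.mem_Ico] at hi
        rw [leafDist_eq (by omega : (1:ℕ) ≠ i + 1),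
          halfD_one hd hi.1 (lt_of_lt_of_le hi.2 hn1)]
      rw [Finset.sum_congr rfl hterm, ← Finset.mul_sum, hT]
      congr 1
      rw [sum_eq_sum_card (Finset.Ico 1 n) h (fun i => Nat.log d i + 1)
        (by
          intro i hi
          rw [Finset.mem_Ico] at hi
          have : Nat.log d i < h :=
            Nat.log_lt_of_lt_pow (by omega) (lt_of_lt_of_le hi.2 hn1)
          show Nat.log d i + 1 ≤ h
          omega)]
      apply Finset.sum_congr rfl
      intro k hk
      rw [Finset.mem_range] at hk
      have hfe : (Finset.Ico 1 n).filter (fun i => k < Nat.log d i + 1)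
          = Finset.Ico (d ^ k) n := by
        ext i
        simp only [Finset.mem_filter, Finset.mem_Ico]
        constructor
        · rintro ⟨⟨hi1, hi2⟩, hki⟩
          refine ⟨Nat.pow_le_of_le_log (by omega) (by omega), hi2⟩
        · rintro ⟨hi1, hi2⟩
          have hdk : 1 ≤ d ^ k := Nat.one_le_pow _ _ (by omega)
          have := Nat.le_log_of_pow_le (by omega : 1 < d) hi1
          exact ⟨⟨by omega, hi2⟩, by omega⟩
      rw [hfe, Nat.card_Ico]
  · -- lower bound
    rintro s ⟨φ, hinj, hbd, rfl⟩
    set t := φ 0 with ht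
    have ht1 : 1 ≤ t ∧ t ≤ d ^ h := hbd 0 hn0
    have hterm : ∀ i ∈ Finset.Ico 1 n,
        leafDist d h t (φ i) = 2 * halfD d h t (φ i) := by
      intro i hi
      rw [Finset.mem_Ico] at hi
      apply leafDist_eq
      intro he
      have := hinj (by simp [Set.mem_Iio]; omega) (by simpa [Set.mem_Iio] using hi.2) he
      omega
    rw [Finset.sum_congr rfl hterm, ← Finset.mul_sum]
    have hGle : ∀ i ∈ Finset.Ico 1 n, halfD d h t (φ i) ≤ h := by
      intro i hi
      rw [Finset.mem_Ico] at hi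
      exact (halfD_mem hd hh1 ht1.2 (hbd i hi.2).2).2.1
    rw [sum_eq_sum_card _ h _ hGle, hT]
    apply Nat.mul_le_mul_left
    apply Finset.sum_le_sum
    intro k hk
    rw [Finset.mem_range] at hk
    -- bound the complement
    set q := (t - 1) / d ^ k with hq
    have hdk : 1 ≤ d ^ k := Nat.one_le_pow _ _ (by omega)
    have hcard_neg : ((Finset.Ico 1 n).filter (fun i => ¬ k < halfD d h t (φ i))).card
        ≤ d ^ k - 1 := by
      have hsub : ∀ i ∈ (Finset.Ico 1 n).filter (fun i => ¬ k < halfD d h t (φ i)),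
          φ i ∈ (Finset.Ico (q * d ^ k + 1) (q * d ^ k + d ^ k + 1)).erase t := by
        intro i hi
        rw [Finset.mem_filter, Finset.mem_Ico] at hi
        obtain ⟨⟨hi1, hi2⟩, hik⟩ := hi
        push_neg at hik
        obtain ⟨hg1, hg2, hg3⟩ := halfD_mem hd hh1 ht1.2 (hbd i hi2).2 (t := t) (j := φ i)
        have hdiv : (t - 1) / d ^ k = (φ i - 1) / d ^ k := div_pow_congr hik hg3
        have hφ1 : 1 ≤ φ i := (hbd i hi2).1
        have hlo : q * d ^ k ≤ φ i - 1 := by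
          rw [hq, hdiv]; exact Nat.div_mul_le_self _ _
        have hhi2 : φ i - 1 < (q + 1) * d ^ k := by
          apply (Nat.div_lt_iff_lt_mul (by omega : 0 < d ^ k)).mp
          rw [← hdiv]; omega
        have hne : φ i ≠ t := by
          intro he
          have := hinj (by simp [Set.mem_Iio]; omega) (by simp [Set.mem_Iio]; omega) he
          omega
        rw [Finset.mem_erase, Finset.mem_Ico]
        have : (q + 1) * d ^ k = q * d ^ k + d ^ k := by ring
        refine ⟨hne, by omega, by omega⟩
      have hinj' : Set.InjOn φ ((Finset.Ico 1 n).filter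
          (fun i => ¬ k < halfD d h t (φ i)) : Set ℕ) := by
        intro a ha b hb hab
        rw [Finset.coe_filter, Set.mem_setOf_eq, Finset.mem_Ico] at ha hb
        exact hinj (by simp [Set.mem_Iio]; omega) (by simp [Set.mem_Iio]; omega) hab
      have := Finset.card_le_card_of_injOn φ hsub hinj'
      have hterase : t ∈ Finset.Ico (q * d ^ k + 1) (q * d ^ k + d ^ k + 1) := by
        rw [Finset.mem_Ico]
        have hlo : q * d ^ k ≤ t - 1 := Nat.div_mul_le_self _ _
        have hhi2 : t - 1 < (q + 1) * d ^ k :=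
          (Nat.div_lt_iff_lt_mul (by omega : 0 < d ^ k)).mp (by omega)
        have : (q + 1) * d ^ k = q * d ^ k + d ^ k := by ring
        omega
      rw [Finset.card_erase_of_mem hterase, Nat.card_Ico] at this
      omega
    have hsplit := Finset.card_filter_add_card_filter_not
      (s := Finset.Ico 1 n) (p := fun i => k < halfD d h t (φ i))
    rw [Nat.card_Ico] at hsplit
    have := hklt k hk
    omega
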